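/- Let H be a nonzero complex Hilbert space and let B, C be bounded linear operators on H. Then w_e(B, C)² ≤ min{ w(B + C)², w(B − C)² } + (1/2)·‖C*C + BB*‖ + w(BC). -/

import Mathlib

open scoped InnerProductSpace
open ContinuousLinearMap

variable {H : Type*} [NormedAddCommGroup H] [InnerProductSpace ℂ H]
  [CompleteSpace H] [Nontrivial H]

/-- The numerical radius of a bounded linear operator. -/
noncomputable def numRad (A : H →L[ℂ] H) : ℝ :=
  ⨆ x : {x : H // ‖x‖ = 1}, ‖⟪A x.1, x.1⟫_ℂ‖

/-- The Crawford number of a bounded linear operator. -/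
noncomputable def crawford (A : H →L[ℂ] H) : ℝ :=
  ⨅ x : {x : H // ‖x‖ = 1}, ‖⟪A x.1, x.1⟫_ℂ‖

/-- The Euclidean operator radius of a pair of bounded linear operators. -/
noncomputable def euclRad (B C : H →L[ℂ] H) : ℝ :=
  ⨆ x : {x : H // ‖x‖ = 1}, Real.sqrt (‖⟪B x.1, x.1⟫_ℂ‖ ^ 2 + ‖⟪C x.1, x.1⟫_ℂ‖ ^ 2)

/-- The absolute value `|A| = (A*A)^(1/2)` of a bounded linear operator. -/
noncomputable def opAbs (A : H →L[ℂ] H) : H →L[ℂ] H := CFC.sqrt (adjoint A * A)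

/-- The real part `Re(A) = (A + A*)/2` of a bounded linear operator. -/
noncomputable def reOp (A : H →L[ℂ] H) : H →L[ℂ] H := (2 : ℂ)⁻¹ • (A + adjoint A)

/-- The imaginary part `Im(A) = (A - A*)/(2i)` of a bounded linear operator. -/
noncomputable def imOp (A : H →L[ℂ] H) : H →L[ℂ] H := (2 * Complex.I)⁻¹ • (A - adjoint A)

set_option maxHeartbeats 1000000

set_option linter.unusedSectionVars false

lemma my_sphere_nonempty : Nonempty {x : H // ‖x‖ = 1} := by
  obtain ⟨v, hv⟩ := exists_ne (0 : H)
  refine ⟨⟨‖v‖⁻¹ • v, ?_⟩⟩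
  have : ‖v‖ ≠ 0 := norm_ne_zero_iff.mpr hv
  rw [norm_smul]
  simp [this]

lemma my_buzano (e a b : H) (he : ‖e‖ = 1) :
    ‖⟪a, e⟫_ℂ * ⟪e, b⟫_ℂ‖ ≤ (‖a‖ * ‖b‖ + ‖⟪a, b⟫_ℂ‖) / 2 := by
  set r : H := (2 * ⟪e, b⟫_ℂ) • e - b with hr
  have hinner : ⟪a, r⟫_ℂ = 2 * ⟪e, b⟫_ℂ * ⟪a, e⟫_ℂ - ⟪a, b⟫_ℂ := by
    simp [hr, inner_sub_right, inner_smul_right]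
  have hnr : ‖r‖ = ‖b‖ := by
    have h1 : ‖r‖ ^ 2 = ‖b‖ ^ 2 := by
      have h0 := norm_sub_sq (𝕜 := ℂ) ((2 * ⟪e, b⟫_ℂ) • e) b
      rw [← hr] at h0
      rw [h0, norm_smul, inner_smul_left, he, mul_one]
      have h2 : (starRingEnd ℂ) (2 * ⟪e, b⟫_ℂ) * ⟪e, b⟫_ℂ
          = 2 * (Complex.normSq ⟪e, b⟫_ℂ : ℂ) := by
        rw [map_mul, mul_assoc, ← Complex.normSq_eq_conj_mul_self]
        simp [Complex.ext_iff]
      rw [h2]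
      simp [Complex.normSq_mul]
      rw [mul_pow, Complex.sq_norm]
      ring
    nlinarith [norm_nonneg r, norm_nonneg b]
  have key : 2 * (⟪e, b⟫_ℂ * ⟪a, e⟫_ℂ) = ⟪a, r⟫_ℂ + ⟪a, b⟫_ℂ := by
    rw [hinner]; ring
  have h2 : ‖(2 : ℂ) * (⟪e, b⟫_ℂ * ⟪a, e⟫_ℂ)‖ ≤ ‖a‖ * ‖b‖ + ‖⟪a, b⟫_ℂ‖ := by
    rw [key]
    refine (norm_add_le _ _).trans ?_
    gcongr
    calc ‖⟪a, r⟫_ℂ‖ ≤ ‖a‖ * ‖r‖ := norm_inner_le_norm a r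
      _ = ‖a‖ * ‖b‖ := by rw [hnr]
  rw [norm_mul] at h2
  simp only [Complex.norm_ofNat] at h2
  rw [mul_comm ⟪e, b⟫_ℂ _, norm_mul] at h2
  rw [norm_mul]
  linarith

lemma my_numRad_bdd (A : H →L[ℂ] H) :
    BddAbove (Set.range fun x : {x : H // ‖x‖ = 1} => ‖⟪A x.1, x.1⟫_ℂ‖) := by
  refine ⟨‖A‖, ?_⟩
  rintro y ⟨x, rfl⟩
  calc ‖⟪A x.1, x.1⟫_ℂ‖ ≤ ‖A x.1‖ * ‖x.1‖ := norm_inner_le_norm _ _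
    _ ≤ ‖A‖ * ‖x.1‖ * ‖x.1‖ := by gcongr; exact A.le_opNorm _
    _ = ‖A‖ := by rw [x.2]; ring

lemma my_le_numRad (A : H →L[ℂ] H) (x : {x : H // ‖x‖ = 1}) :
    ‖⟪A x.1, x.1⟫_ℂ‖ ≤ numRad A :=
  le_ciSup (my_numRad_bdd A) x

lemma my_numRad_nonneg (A : H →L[ℂ] H) : 0 ≤ numRad A :=
  Real.iSup_nonneg fun _ => norm_nonneg _

lemma my_aux (u v s N : ℝ) (hsN : s ≤ N) (hs : 0 ≤ s)
    (h2 : u ≤ s + v) (h3 : v ≤ s + u) : u ^ 2 + v ^ 2 - 2 * (u * v) ≤ N ^ 2 := by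
  nlinarith [mul_nonneg (by linarith : (0:ℝ) ≤ s + v - u) (by linarith : (0:ℝ) ≤ s + u - v),
    mul_nonneg (by linarith : (0:ℝ) ≤ N - s) (by linarith : (0:ℝ) ≤ N + s)]

theorem stmt10 (B C : H →L[ℂ] H) :
    (euclRad B C) ^ 2 ≤
      min ((numRad (B + C)) ^ 2) ((numRad (B - C)) ^ 2)
        + (1/2) * ‖adjoint C * C + B * adjoint B‖ + numRad (B * C) := by
  have hne : Nonempty {x : H // ‖x‖ = 1} := my_sphere_nonempty
  have h1m : 0 ≤ min ((numRad (B + C)) ^ 2) ((numRad (B - C)) ^ 2) :=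
    le_min (sq_nonneg _) (sq_nonneg _)
  have h2m : (0:ℝ) ≤ (1/2) * ‖adjoint C * C + B * adjoint B‖ := by positivity
  have h3m := my_numRad_nonneg (B * C)
  have hMnn : 0 ≤ min ((numRad (B + C)) ^ 2) ((numRad (B - C)) ^ 2)
      + (1/2) * ‖adjoint C * C + B * adjoint B‖ + numRad (B * C) := by linarith
  have key : ∀ x : {x : H // ‖x‖ = 1},
      ‖⟪B x.1, x.1⟫_ℂ‖ ^ 2 + ‖⟪C x.1, x.1⟫_ℂ‖ ^ 2
        ≤ min ((numRad (B + C)) ^ 2) ((numRad (B - C)) ^ 2)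
          + (1/2) * ‖adjoint C * C + B * adjoint B‖ + numRad (B * C) := by
    rintro ⟨x, hx⟩
    show ‖⟪B x, x⟫_ℂ‖ ^ 2 + ‖⟪C x, x⟫_ℂ‖ ^ 2 ≤ _
    -- Buzano step
    have hbz := my_buzano x (C x) (adjoint B x) hx
    have e1 : ⟪x, adjoint B x⟫_ℂ = ⟪B x, x⟫_ℂ := adjoint_inner_right B x x
    have e2 : ⟪C x, adjoint B x⟫_ℂ = ⟪(B * C) x, x⟫_ℂ := by
      rw [ContinuousLinearMap.mul_apply]; exact adjoint_inner_right B (C x) x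
    rw [e1, e2] at hbz
    have hBCle : ‖⟪(B * C) x, x⟫_ℂ‖ ≤ numRad (B * C) := my_le_numRad (B * C) ⟨x, hx⟩
    -- norm term
    have hCx : ‖C x‖ ^ 2 = RCLike.re ⟪(adjoint C * C) x, x⟫_ℂ := by
      rw [ContinuousLinearMap.mul_apply, adjoint_inner_left, inner_self_eq_norm_sq]
    have hBx : ‖adjoint B x‖ ^ 2 = RCLike.re ⟪(B * adjoint B) x, x⟫_ℂ := by
      rw [ContinuousLinearMap.mul_apply, ← adjoint_inner_right, inner_self_eq_norm_sq]
    have hD : ‖C x‖ ^ 2 + ‖adjoint B x‖ ^ 2 ≤ ‖adjoint C * C + B * adjoint B‖ := by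
      rw [hCx, hBx]
      have hre : RCLike.re ⟪(adjoint C * C) x, x⟫_ℂ + RCLike.re ⟪(B * adjoint B) x, x⟫_ℂ
          = RCLike.re ⟪(adjoint C * C + B * adjoint B) x, x⟫_ℂ := by
        rw [add_apply, inner_add_left, map_add]
      rw [hre]
      calc RCLike.re ⟪(adjoint C * C + B * adjoint B) x, x⟫_ℂ
          ≤ ‖⟪(adjoint C * C + B * adjoint B) x, x⟫_ℂ‖ := RCLike.re_le_norm _
        _ ≤ ‖(adjoint C * C + B * adjoint B) x‖ * ‖x‖ := norm_inner_le_norm _ _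
        _ ≤ ‖adjoint C * C + B * adjoint B‖ * ‖x‖ * ‖x‖ := by
            gcongr; exact le_opNorm _ _
        _ = ‖adjoint C * C + B * adjoint B‖ := by rw [hx]; ring
    have hprod : ‖C x‖ * ‖adjoint B x‖ ≤ (‖C x‖ ^ 2 + ‖adjoint B x‖ ^ 2) / 2 := by
      nlinarith [sq_nonneg (‖C x‖ - ‖adjoint B x‖)]
    have hbc : ‖⟪C x, x⟫_ℂ‖ * ‖⟪B x, x⟫_ℂ‖ ≤ (1/4) * ‖adjoint C * C + B * adjoint B‖
        + (1/2) * numRad (B * C) := by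
      rw [← norm_mul]
      linarith [hbz, hprod, hD, hBCle]
    -- min step
    have hplus : ‖⟪B x, x⟫_ℂ‖ ^ 2 + ‖⟪C x, x⟫_ℂ‖ ^ 2
        - 2 * (‖⟪B x, x⟫_ℂ‖ * ‖⟪C x, x⟫_ℂ‖) ≤ numRad (B + C) ^ 2 := by
      have h1 : ‖⟪B x, x⟫_ℂ + ⟪C x, x⟫_ℂ‖ ≤ numRad (B + C) := by
        have h := my_le_numRad (B + C) ⟨x, hx⟩
        simpa [add_apply, inner_add_left] using h
      have h2 : ‖⟪B x, x⟫_ℂ‖ ≤ ‖⟪B x, x⟫_ℂ + ⟪C x, x⟫_ℂ‖ + ‖⟪C x, x⟫_ℂ‖ := by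
        calc ‖⟪B x, x⟫_ℂ‖ = ‖(⟪B x, x⟫_ℂ + ⟪C x, x⟫_ℂ) - ⟪C x, x⟫_ℂ‖ := by ring_nf
          _ ≤ _ := norm_sub_le _ _
      have h3 : ‖⟪C x, x⟫_ℂ‖ ≤ ‖⟪B x, x⟫_ℂ + ⟪C x, x⟫_ℂ‖ + ‖⟪B x, x⟫_ℂ‖ := by
        calc ‖⟪C x, x⟫_ℂ‖ = ‖(⟪B x, x⟫_ℂ + ⟪C x, x⟫_ℂ) - ⟪B x, x⟫_ℂ‖ := by ring_nf
          _ ≤ _ := norm_sub_le _ _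
      exact my_aux _ _ _ _ h1 (norm_nonneg _) h2 h3
    have hminus : ‖⟪B x, x⟫_ℂ‖ ^ 2 + ‖⟪C x, x⟫_ℂ‖ ^ 2
        - 2 * (‖⟪B x, x⟫_ℂ‖ * ‖⟪C x, x⟫_ℂ‖) ≤ numRad (B - C) ^ 2 := by
      have h1 : ‖⟪B x, x⟫_ℂ - ⟪C x, x⟫_ℂ‖ ≤ numRad (B - C) := by
        have h := my_le_numRad (B - C) ⟨x, hx⟩
        simpa [sub_apply, inner_sub_left] using h
      have h2 : ‖⟪B x, x⟫_ℂ‖ ≤ ‖⟪B x, x⟫_ℂ - ⟪C x, x⟫_ℂ‖ + ‖⟪C x, x⟫_ℂ‖ := by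
        calc ‖⟪B x, x⟫_ℂ‖ = ‖(⟪B x, x⟫_ℂ - ⟪C x, x⟫_ℂ) + ⟪C x, x⟫_ℂ‖ := by ring_nf
          _ ≤ _ := norm_add_le _ _
      have h3 : ‖⟪C x, x⟫_ℂ‖ ≤ ‖⟪B x, x⟫_ℂ - ⟪C x, x⟫_ℂ‖ + ‖⟪B x, x⟫_ℂ‖ := by
        have hrev : ‖⟪C x, x⟫_ℂ - ⟪B x, x⟫_ℂ‖ = ‖⟪B x, x⟫_ℂ - ⟪C x, x⟫_ℂ‖ :=
          norm_sub_rev _ _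
        calc ‖⟪C x, x⟫_ℂ‖ = ‖(⟪C x, x⟫_ℂ - ⟪B x, x⟫_ℂ) + ⟪B x, x⟫_ℂ‖ := by ring_nf
          _ ≤ ‖⟪C x, x⟫_ℂ - ⟪B x, x⟫_ℂ‖ + ‖⟪B x, x⟫_ℂ‖ := norm_add_le _ _
          _ = _ := by rw [hrev]
      exact my_aux _ _ _ _ h1 (norm_nonneg _) h2 h3
    have hminle := le_min hplus hminus
    linarith
  have hled : euclRad B C ≤ Real.sqrt (min ((numRad (B + C)) ^ 2) ((numRad (B - C)) ^ 2)
      + (1/2) * ‖adjoint C * C + B * adjoint B‖ + numRad (B * C)) :=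
    ciSup_le fun x => Real.sqrt_le_sqrt (key x)
  have h0 : 0 ≤ euclRad B C := Real.iSup_nonneg fun _ => Real.sqrt_nonneg _
  calc (euclRad B C) ^ 2
      ≤ (Real.sqrt (min ((numRad (B + C)) ^ 2) ((numRad (B - C)) ^ 2)
        + (1/2) * ‖adjoint C * C + B * adjoint B‖ + numRad (B * C))) ^ 2 :=
        pow_le_pow_left₀ h0 hled 2
    _ = _ := Real.sq_sqrt hMnn
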